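/- (AGM fractional cover bound; Theorem 5.1(a)) Let V be a finite set, E a finite family of subsets of V with ⋃_{e∈E} e = V, for each e ∈ E let R_e be a finite relation on attribute set e over a value type D, and let x = (x_e)_{e∈E} be a fractional edge cover of (V,E). Then the natural join J = {t : V → D | t|_e ∈ R_e for every e ∈ E} is finite and |J| ≤ ∏_{e∈E} |R_e|^{x_e}. -/

import Mathlib

open scoped ENNReal

open Finset MeasureTheory in
lemma agm_sum_prod_rpow_le {ι D : Type*} (s : Finset ι) (t : Finset D) (g : ι → D → ℝ≥0∞)
    (p : ι → ℝ) (hp1 : ∑ i ∈ s, p i = 1) (hp0 : ∀ i ∈ s, 0 ≤ p i) :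
    ∑ d ∈ t, ∏ i ∈ s, g i d ^ p i ≤ ∏ i ∈ s, (∑ d ∈ t, g i d) ^ p i := by
  letI : MeasurableSpace {d // d ∈ t} := ⊤
  have h := ENNReal.lintegral_prod_norm_pow_le (μ := Measure.count (α := {d // d ∈ t})) s
    (f := fun i d => g i d.1) (fun i _ => measurable_from_top.aemeasurable) hp1 hp0
  simp only [lintegral_count, tsum_fintype] at h
  rw [Finset.sum_coe_sort t (fun d => ∏ i ∈ s, g i d ^ p i)] at h
  exact le_trans h (le_of_eq (Finset.prod_congr rfl fun i _ => by rw [Finset.sum_coe_sort]))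

/-- pad a tuple outside `s` with a default value -/
def agmExt {V D : Type*} [DecidableEq V] (s : Finset V) (d₀ : D) (t : V → D) : V → D :=
  fun v => if v ∈ s then t v else d₀

open Finset in
lemma agm_core {V D : Type*} [DecidableEq V] {ι : Type*} [Fintype ι] (d₀ : D) :
    ∀ (S : Finset V) (f : ι → Finset V) (T : ι → Finset (V → D)) (x : ι → ℝ),
    (∀ i, 0 ≤ x i) →
    (∀ v ∈ S, 1 ≤ ∑ i ∈ univ.filter (fun i => v ∈ f i), x i) →
    (∀ i, f i ⊆ S) →
    (∀ i, ∀ r ∈ T i, agmExt (f i) d₀ r = r) →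
    ∀ (Jf : Finset (V → D)),
    (∀ t ∈ Jf, agmExt S d₀ t = t) →
    (∀ t ∈ Jf, ∀ i, agmExt (f i) d₀ t ∈ T i) →
    (Jf.card : ℝ≥0∞) ≤ ∏ i, ((T i).card : ℝ≥0∞) ^ (x i) := by
  classical
  intro S
  induction S using Finset.strongInduction with
  | _ S ih =>
  intro f T x hx0 hcov hfS hT Jf hJs hJm
  rcases Jf.eq_empty_or_nonempty with rfl | ⟨t₀, ht₀⟩
  · simp
  have hone : ∀ i, (1 : ℝ≥0∞) ≤ ((T i).card : ℝ≥0∞) := by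
    intro i
    exact_mod_cast Nat.one_le_iff_ne_zero.mpr (Finset.card_ne_zero_of_mem (hJm t₀ ht₀ i))
  rcases S.eq_empty_or_nonempty with rfl | ⟨v, hv⟩
  · -- base case : all tuples are the constant d₀ tuple
    have hcard : Jf.card ≤ 1 := Finset.card_le_one.mpr (fun a ha b hb => by
      rw [← hJs a ha, ← hJs b hb]
      funext w; simp [agmExt])
    calc (Jf.card : ℝ≥0∞) ≤ 1 := by exact_mod_cast hcard
      _ ≤ ∏ i, ((T i).card : ℝ≥0∞) ^ (x i) := Finset.one_le_prod' fun i _ => by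
          calc (1 : ℝ≥0∞) = (1 : ℝ≥0∞) ^ (x i) := (ENNReal.one_rpow _).symm
            _ ≤ _ := ENNReal.rpow_le_rpow (hone i) (hx0 i)
  -- inductive step
  -- an edge containing v
  have hex : ∃ i, v ∈ f i := by
    by_contra h
    push_neg at h
    have h1 := hcov v hv
    rw [Finset.filter_false_of_mem (fun i _ => h i)] at h1
    simp at h1
    linarith
  obtain ⟨i₀, hi₀⟩ := hex
  set Dv : Finset D := (T i₀).image (fun r => r v) with hDv
  have hmemDv : ∀ t ∈ Jf, t v ∈ Dv := by
    intro t ht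
    have h1 := hJm t ht i₀
    have h2 : (agmExt (f i₀) d₀ t) v = t v := by simp [agmExt, hi₀]
    exact Finset.mem_image.mpr ⟨_, h1, h2⟩
  have hdecomp : Jf.card = ∑ d ∈ Dv, (Jf.filter (fun t => t v = d)).card :=
    Finset.card_eq_sum_card_fiberwise hmemDv
  -- sliced relations
  set Ts : ι → D → Finset (V → D) := fun i d =>
    if v ∈ f i then ((T i).filter (fun r => r v = d)).image (fun r => Function.update r v d₀)
    else T i with hTs
  have hinj : ∀ (F : Finset (V → D)) (d : D),
      Set.InjOn (fun t : V → D => Function.update t v d₀) ↑(F.filter (fun t => t v = d)) := by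
    intro F d t ht t' ht' h
    simp only [coe_filter, Set.mem_setOf_eq] at ht ht'
    funext w
    by_cases hw : w = v
    · subst hw; rw [ht.2, ht'.2]
    · have := congrFun h w
      simpa [Function.update_of_ne hw] using this
  have hstep : ∀ d ∈ Dv, ((Jf.filter (fun t => t v = d)).card : ℝ≥0∞) ≤
      ∏ i, ((Ts i d).card : ℝ≥0∞) ^ (x i) := by
    intro d hd
    rw [← Finset.card_image_of_injOn (hinj Jf d)]
    refine ih (S.erase v) (Finset.erase_ssubset hv) (fun i => (f i).erase v) (fun i => Ts i d)
      x hx0 ?_ ?_ ?_ _ ?_ ?_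
    · intro w hw
      obtain ⟨hwv, hwS⟩ := Finset.mem_erase.mp hw
      have heq : univ.filter (fun i => w ∈ (f i).erase v) = univ.filter (fun i => w ∈ f i) :=
        Finset.filter_congr fun i _ => by simp [Finset.mem_erase, hwv]
      rw [heq]
      exact hcov w hwS
    · intro i
      exact Finset.erase_subset_erase v (hfS i)
    · intro i r hr
      by_cases hvf : v ∈ f i
      · rw [hTs] at hr
        simp only [if_pos hvf, Finset.mem_image, Finset.mem_filter] at hr
        obtain ⟨r', ⟨hr', hr'v⟩, rfl⟩ := hr
        have hsup := hT i r' hr'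
        funext w
        by_cases hw : w = v
        · subst hw
          simp [agmExt, Function.update_apply, Finset.mem_erase]
        · have h2 := congrFun hsup w
          simp only [agmExt] at h2
          simp only [agmExt, Function.update_apply, Finset.mem_erase, ne_eq, hw,
            not_false_eq_true, true_and, if_false]
          exact h2
      · rw [hTs] at hr
        simp only [if_neg hvf] at hr
        simpa only [Finset.erase_eq_of_notMem hvf] using hT i r hr
    · intro t ht
      simp only [Finset.mem_image] at ht
      obtain ⟨t', ht', rfl⟩ := ht
      have ht'J : t' ∈ Jf := (Finset.mem_filter.mp ht').1
      have hsup := hJs t' ht'J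
      funext w
      by_cases hw : w = v
      · subst hw
        simp [agmExt, Function.update_apply, Finset.mem_erase]
      · have h2 := congrFun hsup w
        simp only [agmExt] at h2
        simp only [agmExt, Function.update_apply, Finset.mem_erase, ne_eq, hw,
          not_false_eq_true, true_and, if_false]
        exact h2
    · intro t ht i
      simp only [Finset.mem_image] at ht
      obtain ⟨t', ht', rfl⟩ := ht
      obtain ⟨ht'J, ht'v⟩ := Finset.mem_filter.mp ht'
      by_cases hvf : v ∈ f i
      · rw [hTs]
        simp only [if_pos hvf, Finset.mem_image]
        refine ⟨agmExt (f i) d₀ t',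
          Finset.mem_filter.mpr ⟨hJm t' ht'J i, by simp [agmExt, hvf, ht'v]⟩, ?_⟩
        funext w
        by_cases hw : w = v
        · subst hw
          simp [agmExt, Function.update_apply, Finset.mem_erase]
        · simp only [agmExt, Function.update_apply, Finset.mem_erase, ne_eq, hw,
            not_false_eq_true, true_and, if_false]
      · rw [hTs]
        simp only [if_neg hvf]
        have heq : agmExt ((f i).erase v) d₀ (Function.update t' v d₀) = agmExt (f i) d₀ t' := by
          funext w
          rw [Finset.erase_eq_of_notMem hvf]
          simp only [agmExt]
          by_cases hwf : w ∈ f i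
          · have hwv : w ≠ v := fun h => hvf (h ▸ hwf)
            simp [hwf, Function.update_of_ne hwv]
          · simp [hwf]
        rw [heq]
        exact hJm t' ht'J i
  -- now combine with Hölder
  set A : Finset ι := univ.filter (fun i => v ∈ f i) with hA
  set σ : ℝ := ∑ i ∈ A, x i with hσ
  have hσ1 : 1 ≤ σ := hcov v hv
  have hσ0 : σ ≠ 0 := (lt_of_lt_of_le zero_lt_one hσ1).ne'
  have hcardTs : ∀ i ∈ A, ∀ d : D,
      (Ts i d).card = ((T i).filter (fun r => r v = d)).card := by
    intro i hi d
    have hvi : v ∈ f i := (Finset.mem_filter.mp hi).2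
    rw [hTs]
    simp only [if_pos hvi]
    exact Finset.card_image_of_injOn (hinj (T i) d)
  have hsliceSum : ∀ i ∈ A,
      ∑ d ∈ Dv, (((T i).filter (fun r => r v = d)).card : ℝ≥0∞) ≤ ((T i).card : ℝ≥0∞) := by
    intro i _
    rw [← Nat.cast_sum]
    have h1 : ∑ d ∈ Dv, ((T i).filter (fun r => r v = d)).card ≤ (T i).card := by
      have h2 : ((T i).filter (fun r => r v ∈ Dv)).card =
          ∑ d ∈ Dv, (((T i).filter (fun r => r v ∈ Dv)).filter (fun r => r v = d)).card :=
        Finset.card_eq_sum_card_fiberwise (fun r hr => (Finset.mem_filter.mp hr).2)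
      have h3 : ∀ d ∈ Dv, ((T i).filter (fun r => r v = d)).card =
          (((T i).filter (fun r => r v ∈ Dv)).filter (fun r => r v = d)).card := by
        intro d hd
        congr 1
        rw [Finset.filter_filter]
        exact Finset.filter_congr fun r _ => ⟨fun h => ⟨h ▸ hd, h⟩, And.right⟩
      rw [Finset.sum_congr rfl h3, ← h2]
      exact Finset.card_filter_le _ _
    exact_mod_cast h1
  have hexp : ∀ i : ι, σ * (x i / σ) = x i := fun i => by field_simp
  have hinner : ∀ i ∈ A, ∑ d ∈ Dv, ((Ts i d).card : ℝ≥0∞) ^ σ ≤ ((T i).card : ℝ≥0∞) ^ σ := by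
    intro i hi
    set N : ℝ≥0∞ := ((T i).card : ℝ≥0∞) with hN
    have hNtop : N ≠ ⊤ := ENNReal.natCast_ne_top _
    have hN0 : N ≠ 0 := (lt_of_lt_of_le zero_lt_one (hone i)).ne'
    have hle : ∀ d : D, ((Ts i d).card : ℝ≥0∞) ≤ N := by
      intro d
      rw [hcardTs i hi d, hN]
      exact_mod_cast Finset.card_filter_le _ _
    calc ∑ d ∈ Dv, ((Ts i d).card : ℝ≥0∞) ^ σ
        ≤ ∑ d ∈ Dv, N ^ (σ - 1) * ((Ts i d).card : ℝ≥0∞) := by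
          refine Finset.sum_le_sum fun d _ => ?_
          by_cases ha : ((Ts i d).card : ℝ≥0∞) = 0
          · rw [ha, ENNReal.zero_rpow_of_pos (by linarith)]
            exact zero_le
          · have haT : ((Ts i d).card : ℝ≥0∞) ≠ ⊤ := ENNReal.natCast_ne_top _
            calc ((Ts i d).card : ℝ≥0∞) ^ σ
                = ((Ts i d).card : ℝ≥0∞) ^ (σ - 1) * ((Ts i d).card : ℝ≥0∞) ^ (1 : ℝ) := by
                  rw [← ENNReal.rpow_add _ _ ha haT, sub_add_cancel]
              _ ≤ N ^ (σ - 1) * ((Ts i d).card : ℝ≥0∞) := by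
                  rw [ENNReal.rpow_one]
                  exact mul_le_mul_left (ENNReal.rpow_le_rpow (hle d) (by linarith)) _
      _ = N ^ (σ - 1) * ∑ d ∈ Dv, ((Ts i d).card : ℝ≥0∞) := by rw [Finset.mul_sum]
      _ ≤ N ^ (σ - 1) * N := by
          refine mul_le_mul_right ?_ _
          calc ∑ d ∈ Dv, ((Ts i d).card : ℝ≥0∞)
              = ∑ d ∈ Dv, (((T i).filter (fun r => r v = d)).card : ℝ≥0∞) :=
                Finset.sum_congr rfl fun d hd => by rw [hcardTs i hi d]
            _ ≤ N := hsliceSum i hi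
      _ = N ^ σ := by
          nth_rewrite 2 [← ENNReal.rpow_one N]
          rw [← ENNReal.rpow_add _ _ hN0 hNtop, sub_add_cancel]
  have hKey : ∑ d ∈ Dv, ∏ i ∈ A, ((Ts i d).card : ℝ≥0∞) ^ x i ≤
      ∏ i ∈ A, ((T i).card : ℝ≥0∞) ^ x i := by
    calc ∑ d ∈ Dv, ∏ i ∈ A, ((Ts i d).card : ℝ≥0∞) ^ x i
        = ∑ d ∈ Dv, ∏ i ∈ A, (((Ts i d).card : ℝ≥0∞) ^ σ) ^ (x i / σ) := by
          refine Finset.sum_congr rfl fun d _ => Finset.prod_congr rfl fun i _ => ?_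
          rw [← ENNReal.rpow_mul, hexp i]
      _ ≤ ∏ i ∈ A, (∑ d ∈ Dv, ((Ts i d).card : ℝ≥0∞) ^ σ) ^ (x i / σ) := by
          refine agm_sum_prod_rpow_le A Dv _ _ ?_ ?_
          · rw [← Finset.sum_div, ← hσ, div_self hσ0]
          · intro i _
            exact div_nonneg (hx0 i) (by linarith)
      _ ≤ ∏ i ∈ A, (((T i).card : ℝ≥0∞) ^ σ) ^ (x i / σ) := by
          refine Finset.prod_le_prod' fun i hi => ?_
          exact ENNReal.rpow_le_rpow (hinner i hi) (div_nonneg (hx0 i) (by linarith))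
      _ = ∏ i ∈ A, ((T i).card : ℝ≥0∞) ^ x i :=
          Finset.prod_congr rfl fun i _ => by rw [← ENNReal.rpow_mul, hexp i]
  have hTsnot : ∀ d : D, ∀ i ∈ univ.filter (fun i => ¬ v ∈ f i),
      ((Ts i d).card : ℝ≥0∞) ^ x i = ((T i).card : ℝ≥0∞) ^ x i := by
    intro d i hi
    rw [hTs]
    simp only [if_neg ((Finset.mem_filter.mp hi).2)]
  calc (Jf.card : ℝ≥0∞)
      = ∑ d ∈ Dv, ((Jf.filter (fun t => t v = d)).card : ℝ≥0∞) := by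
        rw [hdecomp, Nat.cast_sum]
    _ ≤ ∑ d ∈ Dv, ∏ i, ((Ts i d).card : ℝ≥0∞) ^ x i := Finset.sum_le_sum hstep
    _ = ∑ d ∈ Dv, (∏ i ∈ A, ((Ts i d).card : ℝ≥0∞) ^ x i) *
          ∏ i ∈ univ.filter (fun i => ¬ v ∈ f i), ((T i).card : ℝ≥0∞) ^ x i := by
        refine Finset.sum_congr rfl fun d _ => ?_
        rw [← Finset.prod_filter_mul_prod_filter_not univ (fun i => v ∈ f i)
          (fun i => ((Ts i d).card : ℝ≥0∞) ^ x i)]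
        congr 1
        exact Finset.prod_congr rfl (hTsnot d)
    _ = (∑ d ∈ Dv, ∏ i ∈ A, ((Ts i d).card : ℝ≥0∞) ^ x i) *
          ∏ i ∈ univ.filter (fun i => ¬ v ∈ f i), ((T i).card : ℝ≥0∞) ^ x i := by
        rw [← Finset.sum_mul]
    _ ≤ (∏ i ∈ A, ((T i).card : ℝ≥0∞) ^ x i) *
          ∏ i ∈ univ.filter (fun i => ¬ v ∈ f i), ((T i).card : ℝ≥0∞) ^ x i :=
        mul_le_mul_left hKey _
    _ = ∏ i, ((T i).card : ℝ≥0∞) ^ x i :=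
        Finset.prod_filter_mul_prod_filter_not univ _ _




/-- **AGM fractional cover bound** (Theorem 5.1(a)).
Attributes form a finite set `V`, values lie in `D`. `E` is a finite family of
subsets of `V` (indexed by `ι`) whose union is `V`; `R i` is a finite relation
on attribute set `e i`; `x` is a fractional edge cover of the hypergraph.
Then the natural join `J` is finite and `|J| ≤ ∏ i, |R i| ^ (x i)`. -/
theorem agm_fractional_cover_bound
    {V D : Type*} [Fintype V] [DecidableEq V]
    {ι : Type*} [Fintype ι] (e : ι → Finset V)
    (hunion : ∀ v : V, ∃ i, v ∈ e i)
    (R : ∀ i, Finset ({v // v ∈ e i} → D))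
    (x : ι → ℝ) (hx0 : ∀ i, 0 ≤ x i)
    (hxcover : ∀ v : V, 1 ≤ ∑ i ∈ Finset.univ.filter (fun i => v ∈ e i), x i)
    (J : Set (V → D))
    (hJ : J = {t : V → D | ∀ i, (fun v : {v // v ∈ e i} => t v) ∈ R i}) :
    J.Finite ∧ (Nat.card J : ℝ) ≤ ∏ i, ((R i).card : ℝ) ^ x i := by
  classical
  subst hJ
  have hfin : Set.Finite {t : V → D | ∀ i, (fun v : {v // v ∈ e i} => t v) ∈ R i} := by
    have : Finite ↥{t : V → D | ∀ i, (fun v : {v // v ∈ e i} => t v) ∈ R i} := by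
      refine Finite.of_injective
        (fun t : ↥{t : V → D | ∀ i, (fun v : {v // v ∈ e i} => t v) ∈ R i} =>
          fun i => (⟨fun v : {v // v ∈ e i} => (t : V → D) v, t.2 i⟩ : {r // r ∈ R i})) ?_
      intro t t' h
      apply Subtype.ext
      funext v
      obtain ⟨i, hi⟩ := hunion v
      exact congrFun (congrArg Subtype.val (congrFun h i)) ⟨v, hi⟩
    exact Set.toFinite _
  refine ⟨hfin, ?_⟩
  have hprod_nonneg : 0 ≤ ∏ i, ((R i).card : ℝ) ^ x i :=
    Finset.prod_nonneg fun i _ => Real.rpow_nonneg (Nat.cast_nonneg _) _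
  rcases Set.eq_empty_or_nonempty {t : V → D | ∀ i, (fun v : {v // v ∈ e i} => t v) ∈ R i}
    with hJe | ⟨t₀, ht₀⟩
  · rw [hJe]
    simpa using hprod_nonneg
  have hRone : ∀ i, 1 ≤ ((R i).card : ℝ) := by
    intro i
    exact_mod_cast Finset.card_pos.mpr ⟨_, ht₀ i⟩
  have hone_le : (1 : ℝ) ≤ ∏ i, ((R i).card : ℝ) ^ x i := by
    calc (1:ℝ) = ∏ _i : ι, (1:ℝ) := by simp
      _ ≤ ∏ i, ((R i).card : ℝ) ^ x i := by
        refine Finset.prod_le_prod (by simp) fun i _ => ?_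
        calc (1:ℝ) = (1:ℝ) ^ x i := (Real.one_rpow _).symm
          _ ≤ _ := Real.rpow_le_rpow (by norm_num) (hRone i) (hx0 i)
  rcases isEmpty_or_nonempty V with hV | hV
  · -- V empty : J is a subsingleton
    have hsub : Set.Subsingleton {t : V → D | ∀ i, (fun v : {v // v ∈ e i} => t v) ∈ R i} :=
      fun a _ b _ => funext fun v => (hV.elim v)
    rw [hsub.eq_singleton_of_mem ht₀]
    simpa using hone_le
  · -- V nonempty
    set v₀ : V := Classical.arbitrary V
    set d₀ : D := t₀ v₀ with hd₀
    set T : ι → Finset (V → D) := fun i =>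
      (R i).image (fun r => fun w => if h : w ∈ e i then r ⟨w, h⟩ else d₀) with hTdef
    have hpad : ∀ (t : V → D) i, agmExt (e i) d₀ t =
        (fun w => if h : w ∈ e i then (fun v : {v // v ∈ e i} => t v) ⟨w, h⟩ else d₀) := by
      intro t i
      funext w
      by_cases h : w ∈ e i <;> simp [agmExt, h]
    have hENN : ((hfin.toFinset).card : ℝ≥0∞) ≤ ∏ i, ((T i).card : ℝ≥0∞) ^ x i := by
      refine agm_core d₀ Finset.univ e T x hx0 (fun v _ => hxcover v)
        (fun i => Finset.subset_univ _) ?_ hfin.toFinset ?_ ?_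
      · intro i r hr
        rw [hTdef] at hr
        simp only [Finset.mem_image] at hr
        obtain ⟨r', _, rfl⟩ := hr
        funext w
        by_cases h : w ∈ e i <;> simp [agmExt, h]
      · intro t _
        funext w
        simp [agmExt]
      · intro t ht i
        have htJ := hfin.mem_toFinset.mp ht
        have hmem : (fun v : {v // v ∈ e i} => t v) ∈ R i := htJ i
        rw [hTdef]
        exact Finset.mem_image.mpr ⟨_, hmem, (hpad t i).symm⟩
    have hENN2 : ((hfin.toFinset).card : ℝ≥0∞) ≤ ∏ i, ((R i).card : ℝ≥0∞) ^ x i := by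
      refine le_trans hENN (Finset.prod_le_prod' fun i _ => ?_)
      refine ENNReal.rpow_le_rpow ?_ (hx0 i)
      exact_mod_cast Finset.card_image_le
    rw [Nat.card_eq_card_finite_toFinset hfin]
    have hne : (∏ i, ((R i).card : ℝ≥0∞) ^ x i) ≠ ⊤ := by
      refine (ENNReal.prod_lt_top fun i _ => ?_).ne
      exact ENNReal.rpow_lt_top_of_nonneg (hx0 i) (ENNReal.natCast_ne_top _)
    have := ENNReal.toReal_mono hne hENN2
    rw [ENNReal.toReal_natCast] at this
    refine le_trans this (le_of_eq ?_)
    rw [ENNReal.toReal_prod]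
    refine Finset.prod_congr rfl fun i _ => ?_
    rw [← ENNReal.toReal_rpow, ENNReal.toReal_natCast]
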